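/- arXiv:2411.01486 — 2 statements merged into one kernel-verified Lean document; each statement's English description precedes it below -/
import Mathlib

section
/- There exists a constant C such that for all sufficiently large n and every integer k > (2/3)n + C the following holds: if G is a simple graph on n vertices and H is a k-spanner of G whose girth L satisfies L < 2(n − k), then there exist an edge e of H lying on a cycle of H of length L and a set F of edges of G with |F| ≤ 1 such that the graph H' obtained from H by removing e and adding the edges of F is a k-spanner of G, and no edge of F lies on a cycle of length at most k+1 in H'. -/
/-- `H` is a `k`-spanner of `G`: a spanning subgraph with
`dist_H(u,v) ≤ k * dist_G(u,v)` for all pairs (using extended distances,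
so the condition is vacuous for pairs disconnected in `G`). -/
def IsKSpanner {V : Type*} (G H : SimpleGraph V) (k : ℕ) : Prop :=
  H ≤ G ∧ ∀ u v : V, H.edist u v ≤ (k : ℕ∞) * G.edist u v

/-- `H` is a minimum `k`-spanner of `G`: a `k`-spanner with the fewest edges. -/
def IsMinKSpanner {V : Type*} (G H : SimpleGraph V) (k : ℕ) : Prop :=
  IsKSpanner G H k ∧
    ∀ H' : SimpleGraph V, IsKSpanner G H' k → H.edgeSet.ncard ≤ H'.edgeSet.ncard



open SimpleGraph Walk

section Aux

variable {V : Type*} {Γ : SimpleGraph V}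

private lemma aux_edist_getVert_le {a b : V} (p : Γ.Walk a b) (i j : ℕ) (hij : i ≤ j) :
    Γ.edist (p.getVert i) (p.getVert j) ≤ ((j - i : ℕ) : ℕ∞) := by
  induction p generalizing i j with
  | nil => simp [Walk.getVert, SimpleGraph.edist_self]
  | @cons u x b h q ih =>
    cases i with
    | zero =>
      cases j with
      | zero => simp [SimpleGraph.edist_self]
      | succ j =>
        rw [Walk.getVert_zero, Walk.getVert_cons_succ]
        have h2 := ih 0 j (Nat.zero_le _)
        rw [Walk.getVert_zero, Nat.sub_zero] at h2
        calc Γ.edist u (q.getVert j)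
            ≤ Γ.edist u x + Γ.edist x (q.getVert j) := SimpleGraph.edist_triangle
          _ ≤ 1 + (j : ℕ∞) := add_le_add (le_of_eq (edist_eq_one_iff_adj.mpr h)) h2
          _ = ((j + 1 - 0 : ℕ) : ℕ∞) := by push_cast; ring
    | succ i =>
      cases j with
      | zero => omega
      | succ j =>
        rw [Walk.getVert_cons_succ, Walk.getVert_cons_succ, Nat.succ_sub_succ]
        exact ih i j (by omega)

private lemma aux_edist_getVert_ge {a b : V} (p : Γ.Walk a b)
    (hp : (p.length : ℕ∞) = Γ.edist a b) {i j : ℕ} (hij : i ≤ j) (hj : j ≤ p.length) :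
    ((j - i : ℕ) : ℕ∞) ≤ Γ.edist (p.getVert i) (p.getVert j) := by
  by_contra hlt
  push_neg at hlt
  obtain ⟨m, hm⟩ := WithTop.ne_top_iff_exists.mp (ne_top_of_lt hlt)
  have hmlt : m < j - i := by rw [← hm] at hlt; exact ENat.coe_lt_coe.mp hlt
  have t1 : Γ.edist a (p.getVert i) ≤ (i : ℕ∞) := by
    have := aux_edist_getVert_le p 0 i (Nat.zero_le _)
    rwa [Walk.getVert_zero, Nat.sub_zero] at this
  have t2 : Γ.edist (p.getVert j) b ≤ ((p.length - j : ℕ) : ℕ∞) := by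
    have := aux_edist_getVert_le p j p.length hj
    rwa [Walk.getVert_length] at this
  have tri : Γ.edist a b ≤ Γ.edist a (p.getVert i) + Γ.edist (p.getVert i) (p.getVert j)
      + Γ.edist (p.getVert j) b :=
    le_trans SimpleGraph.edist_triangle (add_le_add_left SimpleGraph.edist_triangle _)
  rw [← hp, ← hm] at tri
  have : (p.length : ℕ∞) ≤ ((i + m + (p.length - j) : ℕ) : ℕ∞) := by
    refine tri.trans ?_
    push_cast
    exact add_le_add (add_le_add t1 le_rfl) t2
  have : p.length ≤ i + m + (p.length - j) := by exact_mod_cast this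
  omega

private lemma aux_edist_le_mul {G H' : SimpleGraph V} {k : ℕ}
    (hadj : ∀ a b : V, G.Adj a b → H'.edist a b ≤ (k : ℕ∞)) :
    ∀ {u v : V} (p : G.Walk u v), H'.edist u v ≤ (k : ℕ∞) * p.length := by
  intro u v p
  induction p with
  | nil => simp [SimpleGraph.edist_self]
  | @cons u x v h q ih =>
    calc H'.edist u v ≤ H'.edist u x + H'.edist x v := SimpleGraph.edist_triangle
      _ ≤ (k : ℕ∞) + (k : ℕ∞) * q.length := add_le_add (hadj _ _ h) ih
      _ = (k : ℕ∞) * ((Walk.cons h q).length) := by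
          rw [Walk.length_cons]; push_cast; ring

private lemma aux_spanner_of_adj {G H' : SimpleGraph V} {k : ℕ} (hk : k ≠ 0) (hle : H' ≤ G)
    (hadj : ∀ a b : V, G.Adj a b → H'.edist a b ≤ (k : ℕ∞)) : IsKSpanner G H' k := by
  refine ⟨hle, fun u v => ?_⟩
  rcases eq_or_ne (G.edist u v) ⊤ with htop | hne
  · rw [htop, ENat.mul_top (by exact_mod_cast hk)]
    exact le_top
  · obtain ⟨p, hp⟩ := SimpleGraph.exists_walk_of_edist_ne_top hne
    rw [← hp]
    exact aux_edist_le_mul hadj p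

private lemma aux_exists_shortest_path [DecidableEq V] {a b : V} (hr : Γ.Reachable a b) :
    ∃ p : Γ.Walk a b, p.IsPath ∧ (p.length : ℕ∞) = Γ.edist a b := by
  obtain ⟨w, hw⟩ := hr.exists_walk_length_eq_edist
  refine ⟨w.bypass, Walk.bypass_isPath w, le_antisymm ?_ (SimpleGraph.edist_le _)⟩
  calc (w.bypass.length : ℕ∞) ≤ (w.length : ℕ∞) := by exact_mod_cast Walk.length_bypass_le w
    _ = Γ.edist a b := hw

private lemma aux_dart_split [DecidableEq V] {u : V} (c : Γ.Walk u u) (hc : c.IsCycle)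
    {d : Γ.Dart} (hd : d ∈ c.darts) (hfst : d.fst = u) :
    ∃ p : Γ.Walk u d.snd, d.edge ∉ p.edges ∧ p.length + 1 = c.length := by
  cases c with
  | nil => simp at hd
  | @cons _ x _ h q =>
    rw [Walk.darts_cons, List.mem_cons] at hd
    rcases hd with rfl | hd
    · refine ⟨q.reverse, ?_, by simp⟩
      have hnodup := hc.isTrail.edges_nodup
      rw [Walk.edges_cons, List.nodup_cons] at hnodup
      rw [Walk.edges_reverse, List.mem_reverse]
      exact hnodup.1
    · exfalso
      have hmem : u ∈ q.support.dropLast := by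
        rw [← Walk.map_fst_darts]
        exact List.mem_map.mpr ⟨d, hd, hfst⟩
      have hnodup : q.support.Nodup := by
        have h2 := ((Walk.isCycle_def _).mp hc).2.2
        rwa [Walk.support_cons, List.tail_cons] at h2
      have heq : q.support.dropLast ++ [u] = q.support := by
        have h3 := List.dropLast_append_getLast (l := q.support) (Walk.support_ne_nil q)
        rwa [Walk.getLast_support] at h3
      rw [← heq] at hnodup
      exact (List.nodup_append'.mp hnodup).2.2 hmem (by simp)

private lemma aux_cycle_split [DecidableEq V] {u v w : V} (huv : u ≠ v) (c : Γ.Walk w w) (hc : c.IsCycle)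
    (he : s(u, v) ∈ c.edges) :
    ∃ p : Γ.Walk u v, s(u, v) ∉ p.edges ∧ p.length + 1 = c.length := by
  obtain ⟨d, hd, hde⟩ : ∃ d ∈ c.darts, d.edge = s(u, v) := by
    simp only [Walk.edges] at he
    exact List.mem_map.mp he
  have hzc : d.fst ∈ c.support := Walk.dart_fst_mem_support_of_mem_darts c hd
  have hc2 : (c.rotate _ hzc).IsCycle := hc.rotate hzc
  have hd' : d ∈ (c.rotate _ hzc).darts := ((Walk.rotate_darts c _ hzc).perm.mem_iff).mpr hd
  have hlen : (c.rotate _ hzc).length = c.length := by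
    have h4 := (Walk.rotate_darts c _ hzc).perm.length_eq
    rwa [Walk.length_darts, Walk.length_darts] at h4
  obtain ⟨p, hp1, hp2⟩ := aux_dart_split (c.rotate _ hzc) hc2 hd' rfl
  have hcases : (d.fst = u ∧ d.snd = v) ∨ (d.fst = v ∧ d.snd = u) := by
    have : s(d.fst, d.snd) = s(u, v) := by rw [← hde]; rfl
    exact Sym2.eq_iff.mp this
  rcases hcases with ⟨h1, h2⟩ | ⟨h1, h2⟩
  · refine ⟨p.copy h1 h2, ?_, by rw [Walk.length_copy]; omega⟩
    rw [Walk.edges_copy, ← hde]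
    exact hp1
  · refine ⟨(p.copy h1 h2).reverse, ?_, by rw [Walk.length_reverse, Walk.length_copy]; omega⟩
    rw [Walk.edges_reverse, List.mem_reverse, Walk.edges_copy, ← hde]
    exact hp1

private lemma aux_reach_transfer {x y : V} {e : Sym2 V} (he : e = s(x, y))
    (hxy : (Γ.deleteEdges {e}).Reachable x y) {a b : V} (p : Γ.Walk a b) :
    (Γ.deleteEdges {e}).Reachable a b := by
  induction p with
  | nil => exact Reachable.refl _
  | @cons a c b h q ih =>
    refine Reachable.trans ?_ ih
    by_cases hce : s(a, c) = e
    · rw [he] at hce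
      rcases Sym2.eq_iff.mp hce with ⟨rfl, rfl⟩ | ⟨rfl, rfl⟩
      · exact hxy
      · exact hxy.symm
    · exact SimpleGraph.Adj.reachable
        (by rw [SimpleGraph.deleteEdges_adj]; exact ⟨h, by simpa using hce⟩)

end Aux

/-- there is a constant `C` such that for all sufficiently large `n`
and every `k > (2/3)n + C`, if `H` is a `k`-spanner of an `n`-vertex graph `G`
whose girth `L` satisfies `L < 2(n-k)`, then there are an edge `e` of `H` lying
on a cycle of `H` of length `L` and a set `F` of edges of `G` with `|F| ≤ 1`
such that `H' = (H \ {e}) ∪ F` is a `k`-spanner of `G` and no edge of `F` lies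
on a cycle of length at most `k+1` in `H'`. -/
theorem break_cycle_add_one_edge :
    ∃ C N : ℕ, ∀ n : ℕ, N ≤ n → ∀ k : ℕ, 2 * n + 3 * C < 3 * k →
      ∀ G H : SimpleGraph (Fin n), IsKSpanner G H k →
        ∀ L : ℕ, H.egirth = (L : ℕ∞) → (L : ℤ) < 2 * ((n : ℤ) - k) →
          ∃ e ∈ H.edgeSet, ∃ F ⊆ G.edgeSet, F.ncard ≤ 1 ∧
            (∃ (v : Fin n) (c : H.Walk v v), c.IsCycle ∧ c.length = L ∧ e ∈ c.edges) ∧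
            IsKSpanner G (H.deleteEdges {e} ⊔ SimpleGraph.fromEdgeSet F) k ∧
            ∀ f ∈ F, ∀ (v : Fin n)
              (c : (H.deleteEdges {e} ⊔ SimpleGraph.fromEdgeSet F).Walk v v),
              c.IsCycle → f ∈ c.edges → k + 1 < c.length := by
  classical
  refine ⟨0, 0, fun n _ k hk3 G H hH L hgirth _ => ?_⟩
  obtain ⟨hHG, hHsp⟩ := hH
  have hk0 : k ≠ 0 := by omega
  -- extract a girth cycle
  have hnac : ¬ H.IsAcyclic := by
    intro hac
    rw [hac.egirth_eq_top] at hgirth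
    exact (ENat.coe_ne_top L) hgirth.symm
  obtain ⟨v0, c, hcyc, hclen⟩ := SimpleGraph.exists_egirth_eq_length.mpr hnac
  have hLc : c.length = L := by
    rw [hgirth] at hclen
    exact_mod_cast hclen.symm
  cases c with
  | nil => exact absurd hcyc Walk.IsCycle.not_of_nil
  | @cons _ y0 _ hadj0 q0 =>
    set e : Sym2 (Fin n) := s(v0, y0) with he_def
    have he_mem : e ∈ H.edgeSet := hadj0
    have he_in_c : e ∈ (Walk.cons hadj0 q0).edges := by
      rw [Walk.edges_cons]; exact List.mem_cons_self
    set H1 := H.deleteEdges {e} with hH1_def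
    have hH1H : H1 ≤ H := SimpleGraph.deleteEdges_le _
    have hH1G : H1 ≤ G := le_trans hH1H hHG
    -- the detour walk around the cycle
    have hq0e : e ∉ q0.edges := by
      have hnodup := hcyc.isTrail.edges_nodup
      rw [Walk.edges_cons, List.nodup_cons] at hnodup
      exact hnodup.1
    have hq0' : ∀ e' ∈ q0.edges, e' ∈ H1.edgeSet := by
      intro e' he'
      rw [hH1_def, SimpleGraph.edgeSet_deleteEdges]
      refine ⟨q0.edges_subset_edgeSet he', ?_⟩
      simp only [Set.mem_singleton_iff]
      rintro rfl
      exact hq0e he'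
    have hreach_xy : H1.Reachable y0 v0 := ⟨q0.transfer H1 hq0'⟩
    have htrans : ∀ a b : Fin n, H.Reachable a b → H1.Reachable a b := by
      rintro a b ⟨p⟩
      exact aux_reach_transfer (x := y0) (y := v0) (Sym2.eq_swap) hreach_xy p
    have hGedist : ∀ a b : Fin n, G.Adj a b → H.edist a b ≤ (k : ℕ∞) := by
      intro a b hab
      have h5 := hHsp a b
      rw [edist_eq_one_iff_adj.mpr hab, mul_one] at h5
      exact h5
    by_cases hA : ∀ a b : Fin n, G.Adj a b → H1.edist a b ≤ (k : ℕ∞)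
    · -- F = ∅ works
      refine ⟨e, he_mem, ∅, by simp, by simp, ⟨v0, _, hcyc, hLc, he_in_c⟩, ?_, by simp⟩
      have h6 := aux_spanner_of_adj hk0 hH1G hA
      rw [SimpleGraph.fromEdgeSet_empty, sup_bot_eq]
      exact h6
    · push_neg at hA
      obtain ⟨u, v, huv, hviol⟩ := hA
      have huvne : u ≠ v := huv.ne
      set f : Sym2 (Fin n) := s(u, v) with hf_def
      set H2 := H1 ⊔ SimpleGraph.fromEdgeSet {f} with hH2_def
      have hH1leH2 : H1 ≤ H2 := le_sup_left
      have hH2adj : H2.Adj u v := by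
        rw [hH2_def, SimpleGraph.sup_adj]
        exact Or.inr (by rw [SimpleGraph.fromEdgeSet_adj]; exact ⟨rfl, huvne⟩)
      have hfG : SimpleGraph.fromEdgeSet {f} ≤ G := by
        intro a b hab
        rw [SimpleGraph.fromEdgeSet_adj, Set.mem_singleton_iff] at hab
        rcases Sym2.eq_iff.mp hab.1 with ⟨rfl, rfl⟩ | ⟨rfl, rfl⟩
        · exact huv
        · exact huv.symm
      have hH2G : H2 ≤ G := sup_le hH1G hfG
      -- (u,v) is H1-reachable
      have hr_uv : H1.Reachable u v :=
        htrans u v (SimpleGraph.reachable_of_edist_ne_top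
          (by exact ne_top_of_le_ne_top (ENat.coe_ne_top k) (hGedist u v huv)))
      -- H2 is a k-spanner
      have hspan : IsKSpanner G H2 k := by
        refine aux_spanner_of_adj hk0 hH2G ?_
        intro a b hab
        by_contra hcon
        have hcon : (k : ℕ∞) < H2.edist a b := lt_of_not_ge hcon
        have hH1ab : (k : ℕ∞) < H1.edist a b :=
          lt_of_lt_of_le hcon (SimpleGraph.edist_anti hH1leH2)
        have hr_ab : H1.Reachable a b :=
          htrans a b (SimpleGraph.reachable_of_edist_ne_top
            (by exact ne_top_of_le_ne_top (ENat.coe_ne_top k) (hGedist a b hab)))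
        obtain ⟨p, hp_path, hp_len⟩ := aux_exists_shortest_path hr_ab
        obtain ⟨q, hq_path, hq_len⟩ := aux_exists_shortest_path hr_uv
        have hkdab : k < p.length := by
          rw [← hp_len] at hH1ab; exact_mod_cast hH1ab
        have hkduv : k < q.length := by
          rw [← hq_len] at hviol; exact_mod_cast hviol
        have hcard_p : p.support.toFinset.card = p.length + 1 := by
          rw [List.toFinset_card_of_nodup hp_path.support_nodup, Walk.length_support]
        have hcard_q : q.support.toFinset.card = q.length + 1 := by
          rw [List.toFinset_card_of_nodup hq_path.support_nodup, Walk.length_support]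
        have hunion : (p.support.toFinset ∪ q.support.toFinset).card ≤ n := by
          calc (p.support.toFinset ∪ q.support.toFinset).card
              ≤ (Finset.univ : Finset (Fin n)).card := Finset.card_le_univ _
            _ = n := by rw [Finset.card_univ, Fintype.card_fin]
        have hcardsum := Finset.card_union_add_card_inter p.support.toFinset q.support.toFinset
        rcases Finset.eq_empty_or_nonempty (p.support.toFinset ∩ q.support.toFinset) with
          hint | hint
        · rw [hint, Finset.card_empty] at hcardsum
          omega
        · obtain ⟨w, hw⟩ := hint
          rw [Finset.mem_inter, List.mem_toFinset, List.mem_toFinset] at hw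
          set T := (Finset.range (p.length + 1)).filter (fun i => p.getVert i ∈ q.support)
            with hT_def
          have hTne : T.Nonempty := by
            obtain ⟨iw, hiw_v, hiw_le⟩ := Walk.mem_support_iff_exists_getVert.mp hw.1
            exact ⟨iw, Finset.mem_filter.mpr
              ⟨Finset.mem_range.mpr (by omega), by rw [hiw_v]; exact hw.2⟩⟩
          set i0 := T.min' hTne with hi0_def
          set i1 := T.max' hTne with hi1_def
          obtain ⟨hi0r, hi0q⟩ := Finset.mem_filter.mp (T.min'_mem hTne)
          obtain ⟨hi1r, hi1q⟩ := Finset.mem_filter.mp (T.max'_mem hTne)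
          have hi0le : i0 < p.length + 1 := Finset.mem_range.mp hi0r
          have hi1le : i1 < p.length + 1 := Finset.mem_range.mp hi1r
          have hi01 : i0 ≤ i1 := T.min'_le _ (T.max'_mem hTne)
          obtain ⟨jA, hjA_v, hjA_le⟩ := Walk.mem_support_iff_exists_getVert.mp hi0q
          obtain ⟨jB, hjB_v, hjB_le⟩ := Walk.mem_support_iff_exists_getVert.mp hi1q
          -- intersection cardinality bound
          have hsub : p.support.toFinset ∩ q.support.toFinset ⊆
              (Finset.Icc i0 i1).image p.getVert := by
            intro z hz
            rw [Finset.mem_inter, List.mem_toFinset, List.mem_toFinset] at hz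
            obtain ⟨iz, hiz_v, hiz_le⟩ := Walk.mem_support_iff_exists_getVert.mp hz.1
            have hizT : iz ∈ T := Finset.mem_filter.mpr
              ⟨Finset.mem_range.mpr (by omega), by rw [hiz_v]; exact hz.2⟩
            exact Finset.mem_image.mpr
              ⟨iz, Finset.mem_Icc.mpr ⟨T.min'_le _ hizT, T.le_max' _ hizT⟩, hiz_v⟩
          have hIcard : (p.support.toFinset ∩ q.support.toFinset).card ≤ i1 + 1 - i0 := by
            calc (p.support.toFinset ∩ q.support.toFinset).card
                ≤ ((Finset.Icc i0 i1).image p.getVert).card := Finset.card_le_card hsub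
              _ ≤ (Finset.Icc i0 i1).card := Finset.card_image_le
              _ = i1 + 1 - i0 := Nat.card_Icc i0 i1
          -- geodesic lower bound on p
          have hgeo : ((i1 - i0 : ℕ) : ℕ∞) ≤ H1.edist (p.getVert i0) (p.getVert i1) :=
            aux_edist_getVert_ge p hp_len hi01 (by omega)
          -- distance pieces
          have hwa : H1.edist a (p.getVert i0) ≤ (i0 : ℕ∞) := by
            have h7 := aux_edist_getVert_le p 0 i0 (Nat.zero_le _)
            rwa [Walk.getVert_zero, Nat.sub_zero] at h7
          have hwb : H1.edist (p.getVert i1) b ≤ ((p.length - i1 : ℕ) : ℕ∞) := by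
            have h7 := aux_edist_getVert_le p i1 p.length (by omega)
            rwa [Walk.getVert_length] at h7
          have hqu : H1.edist (p.getVert i0) u ≤ (jA : ℕ∞) := by
            have h7 := aux_edist_getVert_le q 0 jA (Nat.zero_le _)
            rw [Walk.getVert_zero, Nat.sub_zero, hjA_v] at h7
            rwa [SimpleGraph.edist_comm]
          have hqv : H1.edist v (p.getVert i1) ≤ ((q.length - jB : ℕ) : ℕ∞) := by
            have h7 := aux_edist_getVert_le q jB q.length hjB_le
            rw [Walk.getVert_length, hjB_v] at h7
            rwa [SimpleGraph.edist_comm]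
          have hqv' : H1.edist (p.getVert i0) v ≤ ((q.length - jA : ℕ) : ℕ∞) := by
            have h7 := aux_edist_getVert_le q jA q.length hjA_le
            rwa [Walk.getVert_length, hjA_v] at h7
          have hqu' : H1.edist u (p.getVert i1) ≤ (jB : ℕ∞) := by
            have h7 := aux_edist_getVert_le q 0 jB (Nat.zero_le _)
            rwa [Walk.getVert_zero, Nat.sub_zero, hjB_v] at h7
          have hanti : ∀ (x y : Fin n), H2.edist x y ≤ H1.edist x y := fun x y =>
            SimpleGraph.edist_anti hH1leH2
          have h2uv : H2.edist u v ≤ 1 := le_of_eq (edist_eq_one_iff_adj.mpr hH2adj)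
          rcases le_or_gt jA jB with hj | hj
          · -- same orientation
            have hE2 : H1.edist (p.getVert i0) (p.getVert i1) ≤ ((jB - jA : ℕ) : ℕ∞) := by
              have h7 := aux_edist_getVert_le q jA jB hj
              rwa [hjA_v, hjB_v] at h7
            have hii : i1 - i0 ≤ jB - jA := ENat.coe_le_coe.mp (hgeo.trans hE2)
            have hroute : H2.edist a b ≤
                ((i0 + jA + 1 + (q.length - jB) + (p.length - i1) : ℕ) : ℕ∞) := by
              calc H2.edist a b
                  ≤ H2.edist a u + H2.edist u v + H2.edist v b :=
                    le_trans SimpleGraph.edist_triangle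
                      (add_le_add_left SimpleGraph.edist_triangle _)
                _ ≤ (H2.edist a (p.getVert i0) + H2.edist (p.getVert i0) u) + 1 +
                      (H2.edist v (p.getVert i1) + H2.edist (p.getVert i1) b) :=
                    add_le_add (add_le_add SimpleGraph.edist_triangle h2uv)
                      SimpleGraph.edist_triangle
                _ ≤ ((i0 : ℕ∞) + jA) + 1 + (((q.length - jB : ℕ) : ℕ∞) +
                      ((p.length - i1 : ℕ) : ℕ∞)) := by
                    refine add_le_add (add_le_add (add_le_add ?_ ?_) le_rfl) (add_le_add ?_ ?_)
                    · exact (hanti _ _).trans hwa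
                    · exact (hanti _ _).trans hqu
                    · exact (hanti _ _).trans hqv
                    · exact (hanti _ _).trans hwb
                _ = ((i0 + jA + 1 + (q.length - jB) + (p.length - i1) : ℕ) : ℕ∞) := by
                    push_cast; ring
            have hnat : k < i0 + jA + 1 + (q.length - jB) + (p.length - i1) :=
              ENat.coe_lt_coe.mp (lt_of_lt_of_le hcon hroute)
            omega
          · -- opposite orientation
            have hE2 : H1.edist (p.getVert i0) (p.getVert i1) ≤ ((jA - jB : ℕ) : ℕ∞) := by
              have h7 := aux_edist_getVert_le q jB jA (le_of_lt hj)
              rw [hjA_v, hjB_v] at h7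
              rwa [SimpleGraph.edist_comm]
            have hii : i1 - i0 ≤ jA - jB := ENat.coe_le_coe.mp (hgeo.trans hE2)
            have hroute : H2.edist a b ≤
                ((i0 + (q.length - jA) + 1 + jB + (p.length - i1) : ℕ) : ℕ∞) := by
              calc H2.edist a b
                  ≤ H2.edist a v + H2.edist v u + H2.edist u b :=
                    le_trans SimpleGraph.edist_triangle
                      (add_le_add_left SimpleGraph.edist_triangle _)
                _ ≤ (H2.edist a (p.getVert i0) + H2.edist (p.getVert i0) v) + 1 +
                      (H2.edist u (p.getVert i1) + H2.edist (p.getVert i1) b) := by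
                    refine add_le_add (add_le_add SimpleGraph.edist_triangle ?_)
                      SimpleGraph.edist_triangle
                    rw [SimpleGraph.edist_comm]
                    exact h2uv
                _ ≤ ((i0 : ℕ∞) + ((q.length - jA : ℕ) : ℕ∞)) + 1 + ((jB : ℕ∞) +
                      ((p.length - i1 : ℕ) : ℕ∞)) := by
                    refine add_le_add (add_le_add (add_le_add ?_ ?_) le_rfl) (add_le_add ?_ ?_)
                    · exact (hanti _ _).trans hwa
                    · exact (hanti _ _).trans hqv'
                    · exact (hanti _ _).trans hqu'
                    · exact (hanti _ _).trans hwb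
                _ = ((i0 + (q.length - jA) + 1 + jB + (p.length - i1) : ℕ) : ℕ∞) := by
                    push_cast; ring
            have hnat : k < i0 + (q.length - jA) + 1 + jB + (p.length - i1) :=
              ENat.coe_lt_coe.mp (lt_of_lt_of_le hcon hroute)
            omega
      refine ⟨e, he_mem, {f}, ?_, ?_, ⟨v0, _, hcyc, hLc, he_in_c⟩, hspan, ?_⟩
      · rw [Set.singleton_subset_iff]
        exact huv
      · rw [Set.ncard_singleton]
      · intro f' hf' w2 c2 hc2 hfc2
        rw [Set.mem_singleton_iff] at hf'
        subst hf'
        by_contra hlen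
        push_neg at hlen
        obtain ⟨p2, hp2e, hp2len⟩ := aux_cycle_split huvne c2 hc2 hfc2
        have hpe : ∀ e' ∈ p2.edges, e' ∈ H1.edgeSet := by
          intro e' he'
          have hmem := p2.edges_subset_edgeSet he'
          rw [SimpleGraph.edgeSet_sup] at hmem
          rcases hmem with h | h
          · exact h
          · rw [SimpleGraph.edgeSet_fromEdgeSet, Set.mem_diff, Set.mem_singleton_iff] at h
            exact absurd h.1 (by rintro rfl; exact hp2e he')
        have h8 := SimpleGraph.edist_le (p2.transfer H1 hpe)
        rw [Walk.length_transfer] at h8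
        have h9 : H1.edist u v ≤ (k : ℕ∞) :=
          h8.trans (by exact_mod_cast (by omega : p2.length ≤ k))
        exact absurd h9 (not_le.mpr hviol)
end

section
/- Let G be a finite simple undirected graph, k a positive integer, H a k-spanner of G, and let C be a cycle of H whose length equals the girth of H. Suppose e is an edge of C and (s,t) is a pair of vertices with dist_H(s,t) ≤ k such that removing e from H makes the distance between s and t exceed k. Then any shortest path p between s and t in H that maximizes the number of edges shared with C (among all shortest s–t paths in H) has the property that the set of edges of p lying on C is nonempty, contains e, and forms a consecutive segment (a subpath) of both p and C. -/
open SimpleGraph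

private lemma split_first {V : Type*} {G : SimpleGraph V} (P : Sym2 V → Prop) :
    ∀ {s t : V} (p : G.Walk s t), (∃ f ∈ p.edges, P f) →
      ∃ (u x : V) (p₁ : G.Walk s u) (h : G.Adj u x) (r : G.Walk x t),
        p = p₁.append (Walk.cons h r) ∧ (∀ g ∈ p₁.edges, ¬ P g) ∧ P s(u, x) := by
  intro s t p
  induction p with
  | nil => rintro ⟨f, hf, -⟩; simp at hf
  | @cons a b t h p' ih =>
    rintro ⟨f, hf, hPf⟩
    by_cases hP : P s(a, b)
    · exact ⟨a, b, Walk.nil, h, p', (Walk.nil_append _).symm, by simp, hP⟩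
    · have hf' : f ∈ p'.edges := by
        rcases (by simpa using hf : f = s(a, b) ∨ f ∈ p'.edges) with rfl | hh
        · exact absurd hPf hP
        · exact hh
      obtain ⟨u, x, p₁, hadj, r, hdec, hclean, hPx⟩ := ih ⟨f, hf', hPf⟩
      refine ⟨u, x, Walk.cons h p₁, hadj, r, by rw [hdec, Walk.cons_append], ?_, hPx⟩
      intro g hg
      rcases (by simpa using hg : g = s(a, b) ∨ g ∈ p₁.edges) with rfl | hh
      · exact hP
      · exact hclean g hh

private lemma split_middle {V : Type*} {G : SimpleGraph V} (P : Sym2 V → Prop)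
    {s t : V} (p : G.Walk s t) (hex : ∃ f ∈ p.edges, P f) :
    ∃ (u w : V) (p₁ : G.Walk s u) (q : G.Walk u w) (p₂ : G.Walk w t),
      p = (p₁.append q).append p₂ ∧ (∀ g ∈ p₁.edges, ¬ P g) ∧ (∀ g ∈ p₂.edges, ¬ P g) ∧
      (∃ x, P s(u, x)) ∧ (∃ y, P s(w, y)) := by
  obtain ⟨u, x, p₁, h, r, hdec, hclean, hPx⟩ := split_first P p hex
  have hex' : ∃ f ∈ (Walk.cons h r).reverse.edges, P f :=
    ⟨s(u, x), by simp, hPx⟩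
  obtain ⟨w, y, p₂', h₂, r₂, hdec₂, hclean₂, hPy⟩ := split_first P (Walk.cons h r).reverse hex'
  have hrr : Walk.cons h r = ((Walk.cons h₂ r₂).reverse).append p₂'.reverse := by
    have h3 := congrArg Walk.reverse hdec₂
    rwa [Walk.reverse_reverse, Walk.reverse_append] at h3
  refine ⟨u, w, p₁, (Walk.cons h₂ r₂).reverse, p₂'.reverse, ?_, hclean, ?_, ⟨x, hPx⟩, ⟨y, hPy⟩⟩
  · rw [hdec, hrr, Walk.append_assoc]
  · intro g hg
    rw [Walk.edges_reverse, List.mem_reverse] at hg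
    exact hclean₂ g hg

private lemma rotate_isInfix_doubled {α : Type*} (l : List α) (n : ℕ) :
    l.rotate n <:+: l ++ l := by
  rcases eq_or_ne l [] with rfl | hl
  · simp
  · rw [List.rotate_eq_drop_append_take_mod]
    refine ⟨l.take (n % l.length), l.drop (n % l.length), ?_⟩
    calc l.take (n % l.length) ++ (l.drop (n % l.length) ++ l.take (n % l.length)) ++
          l.drop (n % l.length)
        = (l.take (n % l.length) ++ l.drop (n % l.length)) ++
          (l.take (n % l.length) ++ l.drop (n % l.length)) := by
          simp only [List.append_assoc]
      _ = l ++ l := by rw [List.take_append_drop]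

private lemma end_mem_tail_support {V : Type*} {G : SimpleGraph V} {a b : V}
    (p : G.Walk a b) (hp : ¬ p.Nil) : b ∈ p.support.tail := by
  cases p with
  | nil => simp at hp
  | cons h p' => simpa using p'.end_mem_support

private lemma arc_isPath {V : Type*} [DecidableEq V] {G : SimpleGraph V} {u w : V}
    (cu : G.Walk u u) (hcu : cu.IsCycle) (hw : w ∈ cu.support) (hne : w ≠ u) :
    (cu.takeUntil w hw).IsPath ∧ (cu.dropUntil w hw).IsPath := by
  have hspec := cu.take_spec hw
  set A := cu.takeUntil w hw with hA
  set D := cu.dropUntil w hw with hD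
  have hsup : cu.support = A.support ++ D.support.tail := by
    rw [← hspec, Walk.support_append]
  have htail : cu.support.tail = A.support.tail ++ D.support.tail := by
    rw [Walk.support_eq_cons cu, Walk.support_eq_cons A, List.cons_append] at hsup
    simpa using congrArg List.tail hsup
  have hnd : (A.support.tail ++ D.support.tail).Nodup := htail ▸ hcu.support_nodup
  rw [List.nodup_append] at hnd
  obtain ⟨ndA, ndD, disj⟩ := hnd
  have hwA : w ∈ A.support.tail := by
    have := A.end_mem_support
    rw [Walk.support_eq_cons A] at this
    rcases List.mem_cons.mp this with h1 | h1
    · exact absurd h1 hne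
    · exact h1
  have huD : u ∈ D.support.tail := by
    have := D.end_mem_support
    rw [Walk.support_eq_cons D] at this
    rcases List.mem_cons.mp this with h1 | h1
    · exact absurd h1.symm hne
    · exact h1
  constructor
  · rw [Walk.isPath_def, Walk.support_eq_cons A, List.nodup_cons]
    exact ⟨fun hu => disj u hu u huD rfl, ndA⟩
  · rw [Walk.isPath_def, Walk.support_eq_cons D, List.nodup_cons]
    exact ⟨fun hw' => disj w hwA w hw' rfl, ndD⟩

private lemma cycle_of_two_paths {V : Type*} {H : SimpleGraph V} {u w : V}
    (q X : H.Walk u w) (hq : q.IsPath) (hX : X.IsPath) (hne : q.edges ≠ X.edges) :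
    ∃ (a : V) (cyc : H.Walk a a), cyc.IsCycle ∧ ∀ f ∈ cyc.edges, f ∈ q.edges ∨ f ∈ X.edges := by
  classical
  set K := SimpleGraph.fromEdgeSet {f | f ∈ q.edges ∨ f ∈ X.edges} with hK
  have hmem : ∀ (Y : H.Walk u w), (∀ f ∈ Y.edges, f ∈ q.edges ∨ f ∈ X.edges) →
      ∀ f ∈ Y.edges, f ∈ K.edgeSet := by
    intro Y hY f hf
    rw [hK, SimpleGraph.edgeSet_fromEdgeSet]
    exact ⟨hY f hf, H.not_isDiag_of_mem_edgeSet (Y.edges_subset_edgeSet hf)⟩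
  have hq' := hmem q (fun f hf => Or.inl hf)
  have hX' := hmem X (fun f hf => Or.inr hf)
  have hnac : ¬ K.IsAcyclic := by
    intro hac
    have h5 := hac.path_unique ⟨q.transfer K hq', hq.transfer hq'⟩ ⟨X.transfer K hX', hX.transfer hX'⟩
    have hedges := congrArg (fun P : K.Path u w => (P : K.Walk u w).edges) h5
    simp only [Walk.edges_transfer] at hedges
    exact hne hedges
  simp only [SimpleGraph.IsAcyclic, not_forall, not_not] at hnac
  obtain ⟨a, cyc, hcyc⟩ := hnac
  have hsub : ∀ f ∈ cyc.edges, f ∈ q.edges ∨ f ∈ X.edges := by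
    intro f hf
    have h6 := cyc.edges_subset_edgeSet hf
    rw [hK, SimpleGraph.edgeSet_fromEdgeSet] at h6
    exact h6.1
  have hKE : ∀ f ∈ cyc.edges, f ∈ H.edgeSet := by
    intro f hf
    rcases hsub f hf with h | h
    · exact q.edges_subset_edgeSet h
    · exact X.edges_subset_edgeSet h
  refine ⟨a, cyc.transfer H hKE, hcyc.transfer hKE, ?_⟩
  intro f hf
  rw [Walk.edges_transfer] at hf
  exact hsub f hf

/-- let `c` be a shortest cycle of a `k`-spanner `H` of `G`, `e` an
edge of `c`, and `(s,t)` a pair with `dist_H(s,t) ≤ k` that is disconnected beyond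
distance `k` by removing `e`. Then any shortest `s`–`t` path `p` maximizing the
number of edges shared with `c` shares with `c` a nonempty set of edges containing
`e` which forms a consecutive segment of both `p` and `c` (consecutiveness in the
cycle `c` is expressed as being an infix of the doubled edge list of `c`, up to
reversal). -/
theorem shared_cycle_edges_consecutive {V : Type*} [Fintype V] [DecidableEq V]
    (G H : SimpleGraph V) (k : ℕ) (hk : 0 < k) (hH : IsKSpanner G H k)
    (v : V) (c : H.Walk v v) (hc : c.IsCycle) (hgirth : (c.length : ℕ∞) = H.egirth)
    (e : Sym2 V) (he : e ∈ c.edges) (s t : V)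
    (hst : H.edist s t ≤ (k : ℕ∞))
    (hcut : (k : ℕ∞) < (H.deleteEdges {e}).edist s t)
    (p : H.Walk s t) (hp : p.IsPath) (hlen : (p.length : ℕ∞) = H.edist s t)
    (hmax : ∀ q : H.Walk s t, q.IsPath → (q.length : ℕ∞) = H.edist s t →
      (q.edges.toFinset ∩ c.edges.toFinset).card ≤
        (p.edges.toFinset ∩ c.edges.toFinset).card) :
    ∃ l : List (Sym2 V), l <:+: p.edges ∧
      (l <:+: (c.edges ++ c.edges) ∨ l.reverse <:+: (c.edges ++ c.edges)) ∧
      e ∈ l ∧ ∀ f : Sym2 V, f ∈ l ↔ (f ∈ p.edges ∧ f ∈ c.edges) := by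
  classical
  -- Step 1 : e is an edge of p
  have hep : e ∈ p.edges := by
    by_contra hne
    have hpe : ∀ f ∈ p.edges, f ∈ (H.deleteEdges {e}).edgeSet := by
      intro f hf
      rw [SimpleGraph.edgeSet_deleteEdges]
      refine ⟨p.edges_subset_edgeSet hf, ?_⟩
      simp only [Set.mem_singleton_iff]
      rintro rfl; exact hne hf
    have h1 := SimpleGraph.edist_le (p.transfer _ hpe)
    rw [SimpleGraph.Walk.length_transfer] at h1
    have h2 : (p.length : ℕ∞) ≤ (k : ℕ∞) := by rw [hlen]; exact hst
    exact absurd (h1.trans h2) (not_le.mpr hcut)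
  -- Step 2 : split p at first and last cycle edges
  obtain ⟨u, w, p₁, q, p₂, hdec, hcl₁, hcl₂, ⟨x, hux⟩, ⟨y, hwy⟩⟩ :=
    split_middle (· ∈ c.edges) p ⟨e, hep, he⟩
  have heq : e ∈ q.edges := by
    have h3 := hep
    rw [hdec] at h3
    simp only [SimpleGraph.Walk.edges_append, List.mem_append] at h3
    rcases h3 with (h3 | h3) | h3
    · exact absurd he (hcl₁ e h3)
    · exact h3
    · exact absurd he (hcl₂ e h3)
  have hp' := hp
  rw [hdec] at hp'
  have hqp : q.IsPath := hp'.of_append_left.of_append_right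
  have hne_uw : u ≠ w := by
    rintro rfl
    rw [(SimpleGraph.Walk.isPath_iff_eq_nil (p := q)).mp hqp] at heq
    simp at heq
  -- Step 3 : endpoints of q are on c
  have husup : u ∈ c.support := c.fst_mem_support_of_mem_edges hux
  have hwsup : w ∈ c.support := c.fst_mem_support_of_mem_edges hwy
  have hcnil : ¬ c.Nil := hc.not_nil
  set cu := c.rotate u husup with hcu_def
  have hcuc : cu.IsCycle := hc.rotate husup
  have hrot : cu.edges ~r c.edges := c.rotate_edges u husup
  have hwcu : w ∈ cu.support := by
    have h1 : w ∈ c.support.tail := by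
      rw [SimpleGraph.Walk.support_eq_cons] at hwsup
      rcases List.mem_cons.mp hwsup with h1 | h1
      · rw [h1]; exact end_mem_tail_support c hcnil
      · exact h1
    have h2 : w ∈ cu.support.tail := (c.support_rotate u husup).mem_iff.mpr h1
    rw [SimpleGraph.Walk.support_eq_cons]
    exact List.mem_cons_of_mem _ h2
  have hwne : w ≠ u := fun h => hne_uw h.symm
  obtain ⟨hApath, hDpath⟩ := arc_isPath cu hcuc hwcu hwne
  set A := cu.takeUntil w hwcu with hA
  set D := cu.dropUntil w hwcu with hD
  have hspec : A.append D = cu := cu.take_spec hwcu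
  have hcu_edges : cu.edges = A.edges ++ D.edges := by
    rw [← hspec, SimpleGraph.Walk.edges_append]
  have hculen : cu.length = c.length := by
    have := hrot.perm.length_eq
    rwa [SimpleGraph.Walk.length_edges, SimpleGraph.Walk.length_edges] at this
  have hlenAD : A.length + D.length = c.length := by
    have h4 := congrArg SimpleGraph.Walk.length hspec
    rw [SimpleGraph.Walk.length_append] at h4
    rw [← hculen]; exact h4
  -- Step 4 : q is a shortest u-w path, so its length is at most both arc lengths
  have hedist_ne : H.edist u w ≠ ⊤ :=
    ne_top_of_le_ne_top (by simp) (SimpleGraph.edist_le q)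
  obtain ⟨r, hr⟩ := SimpleGraph.exists_walk_of_edist_ne_top hedist_ne
  have hqr : q.length ≤ r.length := by
    have hW := SimpleGraph.edist_le ((p₁.append r).append p₂)
    have h3 : (((p₁.append q).append p₂).length : ℕ∞) ≤
        (((p₁.append r).append p₂).length : ℕ∞) := by
      calc (((p₁.append q).append p₂).length : ℕ∞) = H.edist s t := by rw [← hdec]; exact hlen
        _ ≤ _ := hW
    rw [Nat.cast_le] at h3
    simp only [SimpleGraph.Walk.length_append] at h3
    omega
  have hdA : q.length ≤ A.length := by
    have h5 : (r.length : ℕ∞) ≤ (A.length : ℕ∞) := by rw [hr]; exact SimpleGraph.edist_le A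
    exact hqr.trans (by exact_mod_cast h5)
  have hdD : q.length ≤ D.length := by
    have h5 : (r.length : ℕ∞) ≤ (D.reverse.length : ℕ∞) := by
      rw [hr]; exact SimpleGraph.edist_le D.reverse
    rw [SimpleGraph.Walk.length_reverse] at h5
    exact hqr.trans (by exact_mod_cast h5)
  -- Step 5 : q coincides with one of the two arcs
  have key : q.edges = A.edges ∨ q.edges = D.reverse.edges := by
    by_contra hcon
    push_neg at hcon
    obtain ⟨hne1, hne2⟩ := hcon
    have bound : ∀ (X : H.Walk u w), X.IsPath → q.edges ≠ X.edges →
        c.length + (q.edges.toFinset ∩ X.edges.toFinset).card ≤ q.length + X.length := by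
      intro X hXp hneX
      obtain ⟨a, cyc, hcyc, hsub⟩ := cycle_of_two_paths q X hqp hXp hneX
      have h1 : c.length ≤ cyc.length := by
        have h6 := (SimpleGraph.le_egirth.mp le_rfl) a cyc hcyc
        rw [← hgirth, Nat.cast_le] at h6
        exact h6
      have h2 : cyc.length ≤ (q.edges.toFinset ∪ X.edges.toFinset).card := by
        have hnd : cyc.edges.Nodup := hcyc.isCircuit.isTrail.edges_nodup
        have h7 : cyc.edges.toFinset ⊆ q.edges.toFinset ∪ X.edges.toFinset := by
          intro f hf
          rw [List.mem_toFinset] at hf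
          rcases hsub f hf with h | h
          · exact Finset.mem_union_left _ (List.mem_toFinset.mpr h)
          · exact Finset.mem_union_right _ (List.mem_toFinset.mpr h)
        calc cyc.length = cyc.edges.length := (SimpleGraph.Walk.length_edges cyc).symm
          _ = cyc.edges.toFinset.card := (List.toFinset_card_of_nodup hnd).symm
          _ ≤ _ := Finset.card_le_card h7
      have h3 := Finset.card_union_add_card_inter q.edges.toFinset X.edges.toFinset
      have hq_card : q.edges.toFinset.card = q.length := by
        rw [List.toFinset_card_of_nodup hqp.isTrail.edges_nodup, SimpleGraph.Walk.length_edges]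
      have hX_card : X.edges.toFinset.card = X.length := by
        rw [List.toFinset_card_of_nodup hXp.isTrail.edges_nodup, SimpleGraph.Walk.length_edges]
      omega
    have bA := bound A hApath hne1
    have bB := bound D.reverse hDpath.reverse hne2
    have hDrev : D.reverse.length = D.length := SimpleGraph.Walk.length_reverse D
    have hiA : (q.edges.toFinset ∩ A.edges.toFinset).card = 0 := by omega
    have hiB : (q.edges.toFinset ∩ D.reverse.edges.toFinset).card = 0 := by omega
    have hecu : e ∈ cu.edges := hrot.mem_iff.mpr he
    rw [hcu_edges, List.mem_append] at hecu
    rcases hecu with hh | hh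
    · have : e ∈ q.edges.toFinset ∩ A.edges.toFinset :=
        Finset.mem_inter.mpr ⟨List.mem_toFinset.mpr heq, List.mem_toFinset.mpr hh⟩
      rw [Finset.card_eq_zero.mp hiA] at this
      simp at this
    · have : e ∈ q.edges.toFinset ∩ D.reverse.edges.toFinset := by
        refine Finset.mem_inter.mpr ⟨List.mem_toFinset.mpr heq, List.mem_toFinset.mpr ?_⟩
        rw [SimpleGraph.Walk.edges_reverse, List.mem_reverse]; exact hh
      rw [Finset.card_eq_zero.mp hiB] at this
      simp at this
  -- Step 6 : conclude
  have hp_edges : p.edges = p₁.edges ++ q.edges ++ p₂.edges := by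
    rw [hdec]; simp [SimpleGraph.Walk.edges_append]
  have hinfix_p : q.edges <:+: p.edges := ⟨p₁.edges, p₂.edges, by rw [hp_edges]⟩
  obtain ⟨n, hn⟩ := hrot.symm
  have hcu_infix : cu.edges <:+: c.edges ++ c.edges := hn ▸ rotate_isInfix_doubled c.edges n
  have hqc : ∀ f ∈ q.edges, f ∈ c.edges := by
    intro f hf
    apply hrot.mem_iff.mp
    rw [hcu_edges, List.mem_append]
    rcases key with hk' | hk'
    · exact Or.inl (hk' ▸ hf)
    · rw [hk', SimpleGraph.Walk.edges_reverse, List.mem_reverse] at hf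
      exact Or.inr hf
  refine ⟨q.edges, hinfix_p, ?_, heq, ?_⟩
  · rcases key with hk' | hk'
    · left
      refine List.IsInfix.trans ?_ hcu_infix
      exact List.IsPrefix.isInfix ⟨D.edges, by rw [hk', hcu_edges]⟩
    · right
      refine List.IsInfix.trans ?_ hcu_infix
      have : q.edges.reverse = D.edges := by
        rw [hk', SimpleGraph.Walk.edges_reverse, List.reverse_reverse]
      rw [this]
      exact List.IsSuffix.isInfix ⟨A.edges, by rw [hcu_edges]⟩
  · intro f
    constructor
    · intro hf
      refine ⟨?_, hqc f hf⟩
      rw [hp_edges]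
      simp only [List.mem_append]
      exact Or.inl (Or.inr hf)
    · rintro ⟨hfp, hfc⟩
      rw [hp_edges] at hfp
      simp only [List.mem_append] at hfp
      rcases hfp with (h | h) | h
      · exact absurd hfc (hcl₁ f h)
      · exact h
      · exact absurd hfc (hcl₂ f h)
end
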